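/- Under the full-rank condition (Σ_u α_{u,i} < 1 for every class label i), if the class of functions F satisfies Assumption 1, then the neural network distance between the corrupted distributions is at most that between the original distributions: d_F(P̃, Q̃) ≤ d_F(P, Q). (Theorem 2, lower bound, eq. (7).) -/

import Mathlib

open scoped BigOperators
open MeasureTheory

/-- `P` is a probability mass function on `Z`. -/
def IsPMF {Z : Type*} (P : Z → ℝ) : Prop :=
  (∀ z, 0 ≤ P z) ∧ Summable P ∧ ∑' z, P z = 1

/-- The corrupted labeled distribution obtained by passing labels through the channel `C`:
`P̃(x,ỹ) = ∑ j, P(x,j) · C j ỹ`. -/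
noncomputable def corrupt {X : Type*} {k : ℕ} (P : X × Fin k → ℝ)
    (C : Matrix (Fin k) (Fin k) ℝ) : X × Fin k → ℝ :=
  fun z => ∑ j, P (z.1, j) * C j z.2

/-- The confusion matrix `C = diag(𝟙 − Σ_u α_u) + Σ_u α_u e_u^T`, where the uncertain
labels are `m, …, m + mt − 1` (the label `Fin.natAdd m u` for `u : Fin mt`). -/
noncomputable def confusion (m mt : ℕ) (α : Fin mt → Fin (m + mt) → ℝ) :
    Matrix (Fin (m + mt)) (Fin (m + mt)) ℝ :=
  Matrix.diagonal (fun i => 1 - ∑ u, α u i) +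
    ∑ u, Matrix.vecMulVec (α u) (Pi.single (Fin.natAdd m u) 1)

/-- `‖T‖_∞ = max_i ∑_j |T i j|` for a square real matrix. -/
noncomputable def matInfNorm {k : ℕ} (T : Matrix (Fin k) (Fin k) ℝ) : ℝ :=
  ⨆ i, ∑ j, |T i j|

/-- `(T ∘ f)(x, y) = ∑_ỹ T y ỹ · f (x, ỹ)`. -/
def chanOp {X : Type*} {k : ℕ} (T : Matrix (Fin k) (Fin k) ℝ)
    (f : X × Fin k → ℝ) : X × Fin k → ℝ :=
  fun z => ∑ j, T z.2 j * f (z.1, j)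

/-- Assumption 1: `F = F₁ + F₂ + constants`, where `F₁` is invariant under the action of
matrices of unit `∞`-norm, and `F₂` consists of `[0,1]`-scalings of label-independent
functions from a class `F₂'`. -/
def Assumption1 {X : Type*} {k : ℕ} (F : Set (X × Fin k → ℝ)) : Prop :=
  ∃ F1 F2 : Set (X × Fin k → ℝ),
    F = {f | ∃ f1 ∈ F1, ∃ f2 ∈ F2, ∃ c : ℝ, f = f1 + f2 + Function.const _ c} ∧
    (∀ T : Matrix (Fin k) (Fin k) ℝ, matInfNorm T = 1 → ∀ f ∈ F1, chanOp T f ∈ F1) ∧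
    (∃ F2' : Set (X → ℝ),
      F2 = {h | ∃ g ∈ F2', ∃ a : ℝ, 0 ≤ a ∧ a ≤ 1 ∧ h = fun z => a * g z.1})

/-- Neural network distance w.r.t. a class `F` of discriminators:
`d_F(P, Q) = sup_{f ∈ F} (E_P[f] − E_Q[f])`. -/
noncomputable def nnDist {X : Type*} {k : ℕ} (F : Set (X × Fin k → ℝ))
    (P Q : X × Fin k → ℝ) : ℝ :=
  sSup ((fun f => (∑' z, P z * f z) - ∑' z, Q z * f z) '' F)

namespace NNAux

set_option linter.unusedSectionVars false
variable {X : Type*} [Countable X] {k : ℕ}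

lemma summable_mul_bdd {P : X × Fin k → ℝ} (hP : Summable P)
    {f : X × Fin k → ℝ} {B : ℝ} (hf : ∀ z, |f z| ≤ B) :
    Summable fun z => P z * f z := by
  refine Summable.of_norm_bounded (hP.abs.mul_right B) ?_
  intro z
  rw [Real.norm_eq_abs, abs_mul]
  exact mul_le_mul_of_nonneg_left (hf z) (abs_nonneg _)

lemma summable_ite_slice {F : X × Fin k → ℝ} (hF : Summable F) (y : Fin k) :
    Summable fun z : X × Fin k => if z.2 = y then F z else 0 := by
  have : (fun z : X × Fin k => if z.2 = y then F z else 0)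
      = Set.indicator {z : X × Fin k | z.2 = y} F := by
    funext z; rw [Set.indicator_apply]; rfl
  rw [this]
  exact hF.indicator _

lemma tsum_prod_fin (F : X × Fin k → ℝ) (hF : Summable F) :
    ∑' z : X × Fin k, F z = ∑ y : Fin k, ∑' x : X, F (x, y) := by
  have h1 : ∀ z : X × Fin k, F z = ∑ y : Fin k, (if z.2 = y then F z else 0) := by
    intro z; simp
  calc ∑' z, F z = ∑' z, ∑ y : Fin k, (if z.2 = y then F z else 0) := tsum_congr h1
    _ = ∑ y : Fin k, ∑' z : X × Fin k, (if z.2 = y then F z else 0) :=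
        Summable.tsum_finsetSum (fun y _ => summable_ite_slice hF y)
    _ = ∑ y : Fin k, ∑' x : X, F (x, y) := by
        refine Finset.sum_congr rfl fun y _ => ?_
        have inj : Function.Injective (fun x : X => ((x, y) : X × Fin k)) := by
          intro a b hab; simpa using hab
        have hzero : Function.support (fun z : X × Fin k => if z.2 = y then F z else 0)
            ⊆ Set.range (fun x : X => ((x, y) : X × Fin k)) := by
          intro z hz
          by_cases h : z.2 = y
          · exact ⟨z.1, by rw [← h]⟩
          · exact absurd (if_neg h) hz
        rw [← inj.tsum_eq hzero]
        simp


lemma summable_fst_mul {h : X → ℝ} (hh : Summable h)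
    {g : X × Fin k → ℝ} {B : ℝ} (hg : ∀ z, |g z| ≤ B) :
    Summable fun z : X × Fin k => h z.1 * g z := by
  have hrep : ∀ z : X × Fin k,
      h z.1 * g z = ∑ y : Fin k, (if z.2 = y then h z.1 * g (z.1, y) else 0) := by
    intro z; simp
  refine Summable.congr ?_ (fun z => (hrep z).symm)
  refine summable_sum fun y _ => ?_
  have hFy : Summable fun x : X => h x * g (x, y) := by
    refine Summable.of_norm_bounded (hh.abs.mul_right B) ?_
    intro x
    rw [Real.norm_eq_abs, abs_mul]
    exact mul_le_mul_of_nonneg_left (hg _) (abs_nonneg _)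
  have inj : Function.Injective (fun x : X => ((x, y) : X × Fin k)) := by
    intro a b hab; simpa using hab
  have hzero : ∀ z ∉ Set.range (fun x : X => ((x, y) : X × Fin k)),
      (if z.2 = y then h z.1 * g (z.1, y) else 0) = 0 := by
    intro z hz
    by_cases hc : z.2 = y
    · exact absurd ⟨z.1, by rw [← hc]⟩ hz
    · exact if_neg hc
  refine (inj.summable_iff hzero).mp ?_
  refine hFy.congr fun x => ?_
  simp

lemma summable_corrupt_mul {P : X × Fin k → ℝ} (hP : Summable P)
    (C : Matrix (Fin k) (Fin k) ℝ) {f : X × Fin k → ℝ} {B : ℝ} (hf : ∀ z, |f z| ≤ B) :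
    Summable fun z => corrupt P C z * f z := by
  have hrep : ∀ z : X × Fin k,
      corrupt P C z * f z = ∑ j, P (z.1, j) * (C j z.2 * f z) := by
    intro z; simp [corrupt, Finset.sum_mul, mul_assoc]
  refine Summable.congr ?_ (fun z => (hrep z).symm)
  refine summable_sum fun j _ => ?_
  have hPj : Summable fun x : X => P (x, j) :=
    hP.comp_injective (fun a b hab => by simpa using hab)
  refine summable_fst_mul hPj (B := (∑ y, |C j y|) * B) ?_
  intro z
  rw [abs_mul]
  rcases le_or_gt (|f z|) B with hB | hB
  · have hB0 : (0:ℝ) ≤ B := le_trans (abs_nonneg _) (hf z)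
    refine mul_le_mul ?_ (hf z) (abs_nonneg _) (Finset.sum_nonneg fun _ _ => abs_nonneg _)
    exact Finset.single_le_sum (f := fun y => |C j y|) (fun _ _ => abs_nonneg _)
      (Finset.mem_univ z.2)
  · exact absurd (hf z) (not_le.mpr hB)


lemma chanOp_bdd (C : Matrix (Fin k) (Fin k) ℝ) {f : X × Fin k → ℝ} {B : ℝ}
    (hf : ∀ z, |f z| ≤ B) :
    ∀ z, |chanOp C f z| ≤ (∑ i, ∑ j, |C i j|) * B := by
  intro z
  have hB0 : (0:ℝ) ≤ B := le_trans (abs_nonneg _) (hf z)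
  calc |chanOp C f z| ≤ ∑ j, |C z.2 j * f (z.1, j)| := Finset.abs_sum_le_sum_abs _ _
    _ ≤ ∑ j, |C z.2 j| * B := by
        refine Finset.sum_le_sum fun j _ => ?_
        rw [abs_mul]
        exact mul_le_mul_of_nonneg_left (hf _) (abs_nonneg _)
    _ = (∑ j, |C z.2 j|) * B := (Finset.sum_mul _ _ _).symm
    _ ≤ (∑ i, ∑ j, |C i j|) * B := by
        refine mul_le_mul_of_nonneg_right ?_ hB0
        exact Finset.single_le_sum (f := fun i => ∑ j, |C i j|)
          (fun _ _ => Finset.sum_nonneg fun _ _ => abs_nonneg _) (Finset.mem_univ z.2)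

lemma tsum_corrupt_mul {P : X × Fin k → ℝ} (hP : Summable P)
    (C : Matrix (Fin k) (Fin k) ℝ) {f : X × Fin k → ℝ} {B : ℝ} (hf : ∀ z, |f z| ≤ B) :
    ∑' z, corrupt P C z * f z = ∑' z, P z * chanOp C f z := by
  have hPj : ∀ j : Fin k, Summable fun x : X => P (x, j) := fun j =>
    hP.comp_injective (fun a b hab => by simpa using hab)
  have hslice : ∀ (j y : Fin k), Summable fun x : X => P (x, j) * (C j y * f (x, y)) := by
    intro j y
    refine Summable.of_norm_bounded ((hPj j).abs.mul_right (|C j y| * B)) ?_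
    intro x
    rw [Real.norm_eq_abs, abs_mul, abs_mul]
    refine mul_le_mul_of_nonneg_left ?_ (abs_nonneg _)
    exact mul_le_mul_of_nonneg_left (hf _) (abs_nonneg _)
  have lhs : ∑' z, corrupt P C z * f z
      = ∑ y : Fin k, ∑ j : Fin k, ∑' x : X, P (x, j) * (C j y * f (x, y)) := by
    rw [tsum_prod_fin _ (summable_corrupt_mul hP C hf)]
    refine Finset.sum_congr rfl fun y _ => ?_
    have : ∀ x : X, corrupt P C (x, y) * f (x, y)
        = ∑ j, P (x, j) * (C j y * f (x, y)) := by
      intro x; simp [corrupt, Finset.sum_mul, mul_assoc]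
    rw [tsum_congr this, Summable.tsum_finsetSum (fun j _ => hslice j y)]
  have rhs : ∑' z, P z * chanOp C f z
      = ∑ y : Fin k, ∑ j : Fin k, ∑' x : X, P (x, y) * (C y j * f (x, j)) := by
    rw [tsum_prod_fin _ (summable_mul_bdd hP (chanOp_bdd C hf))]
    refine Finset.sum_congr rfl fun y _ => ?_
    have : ∀ x : X, P (x, y) * chanOp C f (x, y)
        = ∑ j, P (x, y) * (C y j * f (x, j)) := by
      intro x; simp [chanOp, Finset.mul_sum, mul_assoc]
    rw [tsum_congr this, Summable.tsum_finsetSum (fun j _ => hslice y j)]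
  rw [lhs, rhs, Finset.sum_comm]


section Conf

variable {m mt : ℕ} (α : Fin mt → Fin (m + mt) → ℝ)

lemma confusion_apply (i j : Fin (m + mt)) :
    confusion m mt α i j = (if i = j then (1 - ∑ u, α u i) else 0)
      + ∑ u, α u i * (if j = Fin.natAdd m u then 1 else 0) := by
  simp [confusion, Matrix.add_apply, Matrix.diagonal_apply, Matrix.sum_apply,
    Matrix.vecMulVec_apply, Pi.single_apply]


variable (hα0 : ∀ u i, 0 ≤ α u i)
  (hαu : ∀ (u : Fin mt) (i : Fin (m + mt)), m ≤ (i : ℕ) → α u i = 0)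
  (hfull : ∀ i : Fin (m + mt), (i : ℕ) < m → ∑ u, α u i < 1)

include hα0 hαu hfull in
lemma d_pos (i : Fin (m + mt)) : 0 < 1 - ∑ u, α u i := by
  rcases lt_or_ge (i : ℕ) m with h | h
  · linarith [hfull i h]
  · have : ∑ u, α u i = 0 := Finset.sum_eq_zero fun u _ => hαu u i h
    rw [this]; norm_num

lemma conf_row_sum (i : Fin (m + mt)) : ∑ j, confusion m mt α i j = 1 := by
  have : ∀ j, confusion m mt α i j = (if i = j then (1 - ∑ u, α u i) else 0)
      + ∑ u, α u i * (if j = Fin.natAdd m u then 1 else 0) := confusion_apply α i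
  simp only [this]
  rw [Finset.sum_add_distrib, Finset.sum_ite_eq Finset.univ i (fun _ => 1 - ∑ u, α u i),
    Finset.sum_comm]
  rw [show ∑ u : Fin mt, ∑ j : Fin (m+mt), α u i * (if j = Fin.natAdd m u then 1 else 0)
      = ∑ u : Fin mt, α u i from Finset.sum_congr rfl fun u _ => by simp]
  simp

include hα0 hαu hfull in
lemma conf_nonneg (i j : Fin (m + mt)) : 0 ≤ confusion m mt α i j := by
  rw [confusion_apply]
  have h1 : (0:ℝ) ≤ if i = j then (1 - ∑ u, α u i) else 0 := by
    split
    · exact le_of_lt (d_pos α hα0 hαu hfull i)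
    · exact le_refl 0
  have h2 : (0:ℝ) ≤ ∑ u, α u i * (if j = Fin.natAdd m u then 1 else 0) :=
    Finset.sum_nonneg fun u _ => mul_nonneg (hα0 u i) (by positivity)
  linarith


include hα0 hαu hfull in
lemma matInfNorm_confusion (hk : 0 < m + mt) : matInfNorm (confusion m mt α) = 1 := by
  have : Nonempty (Fin (m + mt)) := ⟨⟨0, hk⟩⟩
  have hrow : ∀ i, ∑ j, |confusion m mt α i j| = 1 := by
    intro i
    rw [show ∑ j, |confusion m mt α i j| = ∑ j, confusion m mt α i j from
      Finset.sum_congr rfl fun j _ => abs_of_nonneg (conf_nonneg α hα0 hαu hfull i j)]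
    exact conf_row_sum α i
  simp only [matInfNorm, hrow, ciSup_const]

noncomputable def Einv (m mt : ℕ) (α : Fin mt → Fin (m + mt) → ℝ) :
    Matrix (Fin (m + mt)) (Fin (m + mt)) ℝ :=
  Matrix.of fun i j => (1 - ∑ u, α u i)⁻¹ *
    ((if i = j then 1 else 0) - ∑ u, α u i * (if j = Fin.natAdd m u then 1 else 0))

include hαu in
lemma Einv_uncertain {i : Fin (m + mt)} (hi : m ≤ (i : ℕ)) (j : Fin (m + mt)) :
    Einv m mt α i j = if i = j then 1 else 0 := by
  have h0 : ∀ u : Fin mt, α u i = 0 := fun u => hαu u i hi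
  simp [Einv, h0]

include hα0 hαu hfull in
lemma conf_mul_Einv (i k' : Fin (m + mt)) :
    ∑ j, confusion m mt α i j * Einv m mt α j k' = if i = k' then 1 else 0 := by
  have hd := d_pos α hα0 hαu hfull i
  have hdne : (1 - ∑ u, α u i) ≠ 0 := ne_of_gt hd
  have step : ∀ j, confusion m mt α i j * Einv m mt α j k'
      = (if i = j then (1 - ∑ u, α u i) else 0) * Einv m mt α j k'
        + ∑ u, α u i * ((if j = Fin.natAdd m u then 1 else 0) * Einv m mt α j k') := by
    intro j
    rw [confusion_apply, add_mul, Finset.sum_mul]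
    congr 1
    exact Finset.sum_congr rfl fun u _ => by ring
  rw [Finset.sum_congr rfl fun j _ => step j, Finset.sum_add_distrib]
  have s1 : ∑ x, (if i = x then (1 - ∑ u, α u i) else 0) * Einv m mt α x k'
      = (1 - ∑ u, α u i) * Einv m mt α i k' := by
    simp [ite_mul]
  have s2 : ∑ x, ∑ u, α u i * ((if x = Fin.natAdd m u then 1 else 0) * Einv m mt α x k')
      = ∑ u, α u i * Einv m mt α (Fin.natAdd m u) k' := by
    rw [Finset.sum_comm]
    refine Finset.sum_congr rfl fun u _ => ?_
    simp [ite_mul, mul_ite]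
  rw [s1, s2]
  have e1 : (1 - ∑ u, α u i) * Einv m mt α i k'
      = (if i = k' then 1 else 0) - ∑ u, α u i * (if k' = Fin.natAdd m u then 1 else 0) := by
    rw [Einv]
    simp only [Matrix.of_apply]
    rw [← mul_assoc, mul_inv_cancel₀ hdne, one_mul]
  have e2 : ∀ u : Fin mt, Einv m mt α (Fin.natAdd m u) k'
      = if Fin.natAdd m u = k' then 1 else 0 := by
    intro u
    exact Einv_uncertain α hαu (by simp) k'
  rw [e1]
  have e3 : ∑ u, α u i * Einv m mt α (Fin.natAdd m u) k'
      = ∑ u, α u i * (if k' = Fin.natAdd m u then 1 else 0) := by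
    refine Finset.sum_congr rfl fun u _ => ?_
    rw [e2 u]
    congr 1
    simp [eq_comm]
  rw [e3]
  ring


end Conf

section Chan

variable {X : Type*} {k : ℕ}

lemma chanOp_chanOp (A B : Matrix (Fin k) (Fin k) ℝ) (f : X × Fin k → ℝ) :
    chanOp A (chanOp B f) = fun z => ∑ j', (∑ j, A z.2 j * B j j') * f (z.1, j') := by
  funext z
  simp only [chanOp, Finset.mul_sum, Finset.sum_mul, mul_assoc]
  rw [Finset.sum_comm]

lemma chanOp_decomp (C : Matrix (Fin k) (Fin k) ℝ) (hrow : ∀ i, ∑ j, C i j = 1)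
    (f1 : X × Fin k → ℝ) (g : X → ℝ) (a c : ℝ) :
    chanOp C (f1 + (fun z => a * g z.1) + Function.const _ c)
      = chanOp C f1 + (fun z => a * g z.1) + Function.const _ c := by
  funext z
  simp only [chanOp, Pi.add_apply, Function.const_apply, mul_add, Finset.sum_add_distrib]
  rw [← Finset.sum_mul, ← Finset.sum_mul, hrow z.2, one_mul, one_mul]

lemma chanOp_mul_fun (C : Matrix (Fin k) (Fin k) ℝ) (r : ℝ) (h : X × Fin k → ℝ) :
    chanOp C (fun z => r * h z) = fun z => r * chanOp C h z := by
  funext z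
  simp [chanOp, Finset.mul_sum, mul_left_comm]

lemma chanOp_smul_mat (c : ℝ) (E : Matrix (Fin k) (Fin k) ℝ) (f : X × Fin k → ℝ) :
    chanOp (c • E) f = fun z => c * chanOp E f z := by
  funext z
  simp [chanOp, Finset.mul_sum, mul_assoc]

end Chan

section Norm

variable {k : ℕ}

lemma matInfNorm_inv_smul [Nonempty (Fin k)] {E : Matrix (Fin k) (Fin k) ℝ}
    (ht : 1 ≤ matInfNorm E) : matInfNorm ((matInfNorm E)⁻¹ • E) = 1 := by
  set r : Fin k → ℝ := fun i => ∑ j, |E i j| with hr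
  set t : ℝ := matInfNorm E with htt
  have ht0 : 0 < t := lt_of_lt_of_le zero_lt_one ht
  have bdd : BddAbove (Set.range r) := (Set.finite_range r).bddAbove
  obtain ⟨i₀, hi₀⟩ := Finite.exists_max r
  have htr : t = r i₀ := le_antisymm (ciSup_le hi₀) (le_ciSup bdd i₀)
  have hrow : ∀ i, ∑ j, |((t⁻¹ • E : Matrix (Fin k) (Fin k) ℝ)) i j| = t⁻¹ * r i := by
    intro i
    have habs : ∀ j, |((t⁻¹ • E : Matrix (Fin k) (Fin k) ℝ)) i j| = t⁻¹ * |E i j| := by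
      intro j
      rw [Matrix.smul_apply, smul_eq_mul, abs_mul,
        abs_of_nonneg (inv_nonneg.2 (le_of_lt ht0))]
    rw [Finset.sum_congr rfl fun j _ => habs j, ← Finset.mul_sum]
  have bdd2 : BddAbove (Set.range fun i => ∑ j, |((t⁻¹ • E : Matrix (Fin k) (Fin k) ℝ)) i j|) :=
    (Set.finite_range _).bddAbove
  refine le_antisymm (ciSup_le fun i => ?_) ?_
  · rw [hrow i]
    calc t⁻¹ * r i ≤ t⁻¹ * t :=
          mul_le_mul_of_nonneg_left (le_trans (hi₀ i) htr.ge) (inv_nonneg.2 ht0.le)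
      _ = 1 := inv_mul_cancel₀ (ne_of_gt ht0)
  · have := le_ciSup bdd2 i₀
    rw [hrow i₀, ← htr, inv_mul_cancel₀ (ne_of_gt ht0)] at this
    exact this

end Norm

section Conf2

variable {m mt : ℕ} (α : Fin mt → Fin (m + mt) → ℝ)
variable (hα0 : ∀ u i, 0 ≤ α u i)
  (hαu : ∀ (u : Fin mt) (i : Fin (m + mt)), m ≤ (i : ℕ) → α u i = 0)
  (hfull : ∀ i : Fin (m + mt), (i : ℕ) < m → ∑ u, α u i < 1)

include hαu in
lemma einv_norm_ge_one (hmt : 0 < mt) : 1 ≤ matInfNorm (Einv m mt α) := by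
  have : Nonempty (Fin (m + mt)) := ⟨⟨0, by omega⟩⟩
  set i₀ : Fin (m + mt) := Fin.natAdd m ⟨0, hmt⟩ with hi₀
  have hrow : ∑ j, |Einv m mt α i₀ j| = 1 := by
    have : ∀ j, Einv m mt α i₀ j = if i₀ = j then 1 else 0 :=
      Einv_uncertain α hαu (by simp [hi₀])
    simp [this, apply_ite]
  have bdd : BddAbove (Set.range fun i => ∑ j, |Einv m mt α i j|) :=
    (Set.finite_range _).bddAbove
  have := le_ciSup bdd i₀
  rw [hrow] at this
  exact this

include hα0 hαu hfull in
lemma chanOp_conf_Einv {X : Type*} (f : X × Fin (m + mt) → ℝ) :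
    chanOp (confusion m mt α) (chanOp (Einv m mt α) f) = f := by
  rw [chanOp_chanOp]
  funext z
  rw [Finset.sum_congr rfl fun j' _ => by
    rw [conf_mul_Einv α hα0 hαu hfull z.2 j']]
  simp [ite_mul]

end Conf2


lemma tsum_three {Z : Type*} {P f φ : Z → ℝ}
    (hSf : Summable fun z => P z * f z) (hSφ : Summable fun z => P z * φ z)
    (hSP : Summable P) (r s w : ℝ) :
    ∑' z, P z * (r * f z + (s * φ z + w))
      = r * (∑' z, P z * f z) + (s * (∑' z, P z * φ z) + w * ∑' z, P z) := by
  have e : ∀ z, P z * (r * f z + (s * φ z + w))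
      = r * (P z * f z) + (s * (P z * φ z) + w * P z) := fun z => by ring
  rw [tsum_congr e, Summable.tsum_add (hSf.mul_left r) ((hSφ.mul_left s).add (hSP.mul_left w)),
    Summable.tsum_add (hSφ.mul_left s) (hSP.mul_left w), tsum_mul_left, tsum_mul_left, tsum_mul_left]

end NNAux

theorem nnDist_corrupted_le_nnDist_original {X : Type*} [Countable X] {m mt : ℕ} (hm : 0 < m) (hmt : 0 < mt)
    (α : Fin mt → Fin (m + mt) → ℝ)
    (hα0 : ∀ u i, 0 ≤ α u i) (hα1 : ∀ u i, α u i ≤ 1)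
    (hαu : ∀ (u : Fin mt) (i : Fin (m + mt)), m ≤ (i : ℕ) → α u i = 0)
    (hfull : ∀ i : Fin (m + mt), (i : ℕ) < m → ∑ u, α u i < 1)
    (P Q : X × Fin (m + mt) → ℝ) (hP : IsPMF P) (hQ : IsPMF Q)
    (hPz : ∀ (x : X) (y : Fin (m + mt)), m ≤ (y : ℕ) → P (x, y) = 0)
    (hQz : ∀ (x : X) (y : Fin (m + mt)), m ≤ (y : ℕ) → Q (x, y) = 0)
    (F : Set (X × Fin (m + mt) → ℝ))
    (hFbd : ∀ f ∈ F, ∃ B : ℝ, ∀ z, |f z| ≤ B)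
    (hF : Assumption1 F) :
    nnDist F (corrupt P (confusion m mt α)) (corrupt Q (confusion m mt α)) ≤ nnDist F P Q := by
  classical
  obtain ⟨hP0, hPs, hP1⟩ := hP
  obtain ⟨hQ0, hQs, hQ1⟩ := hQ
  obtain ⟨F1, F2, hFeq, hF1inv, F2', hF2eq⟩ := hF
  have hk : 0 < m + mt := by omega
  have hne : Nonempty (Fin (m + mt)) := ⟨⟨0, hk⟩⟩
  have hrow : ∀ i, ∑ j, confusion m mt α i j = 1 := NNAux.conf_row_sum α
  have hCnorm : matInfNorm (confusion m mt α) = 1 :=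
    NNAux.matInfNorm_confusion α hα0 hαu hfull hk
  have hmem : ∀ f ∈ F, chanOp (confusion m mt α) f ∈ F := by
    intro f hf
    rw [hFeq] at hf ⊢
    obtain ⟨f1, hf1, f2, hf2, c, rfl⟩ := hf
    have hf2' := hf2
    rw [hF2eq] at hf2'
    obtain ⟨g, hg, a, ha0, ha1, rfl⟩ := hf2'
    exact ⟨chanOp (confusion m mt α) f1, hF1inv _ hCnorm f1 hf1, _, hf2, c,
      NNAux.chanOp_decomp (confusion m mt α) hrow f1 g a c⟩
  have hsub : ((fun f => (∑' z, corrupt P (confusion m mt α) z * f z)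
        - ∑' z, corrupt Q (confusion m mt α) z * f z) '' F)
      ⊆ ((fun f => (∑' z, P z * f z) - ∑' z, Q z * f z) '' F) := by
    rintro v ⟨f, hfF, rfl⟩
    obtain ⟨B, hB⟩ := hFbd f hfF
    have e : (∑' z, corrupt P (confusion m mt α) z * f z)
          - ∑' z, corrupt Q (confusion m mt α) z * f z
        = (∑' z, P z * chanOp (confusion m mt α) f z)
          - ∑' z, Q z * chanOp (confusion m mt α) f z := by
      rw [NNAux.tsum_corrupt_mul hPs (confusion m mt α) hB,
        NNAux.tsum_corrupt_mul hQs (confusion m mt α) hB]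
    exact ⟨chanOp (confusion m mt α) f, hmem f hfF, e.symm⟩
  rw [nnDist, nnDist]
  by_cases hFne : F.Nonempty
  · by_cases hbdd : BddAbove ((fun f => (∑' z, P z * f z) - ∑' z, Q z * f z) '' F)
    · exact csSup_le_csSup hbdd (hFne.image _) hsub
    · have hbdd2 : ¬ BddAbove ((fun f => (∑' z, corrupt P (confusion m mt α) z * f z)
          - ∑' z, corrupt Q (confusion m mt α) z * f z) '' F) := by
        intro hb2
        apply hbdd
        obtain ⟨b, hb⟩ := hb2
        have ht1 : 1 ≤ matInfNorm (NNAux.Einv m mt α) := NNAux.einv_norm_ge_one α hαu hmt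
        have ht0 : (0:ℝ) < matInfNorm (NNAux.Einv m mt α) := lt_of_lt_of_le zero_lt_one ht1
        set t : ℝ := matInfNorm (NNAux.Einv m mt α) with htdef
        have hTnorm : matInfNorm (t⁻¹ • NNAux.Einv m mt α) = 1 :=
          NNAux.matInfNorm_inv_smul ht1
        refine ⟨t * b, ?_⟩
        rintro v ⟨f, hfF, rfl⟩
        obtain ⟨Bf, hBf⟩ := hFbd f hfF
        have hfF' := hfF
        rw [hFeq] at hfF'
        obtain ⟨f1, hf1, f2, hf2, c, hfdec⟩ := hfF'
        have hf2' := hf2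
        rw [hF2eq] at hf2'
        obtain ⟨g, hg, a, ha0, ha1, hf2dec⟩ := hf2'
        set ga : X × Fin (m + mt) → ℝ :=
          chanOp (t⁻¹ • NNAux.Einv m mt α) f1 + f2 + Function.const _ c with hga
        set g0 : X × Fin (m + mt) → ℝ :=
          chanOp (t⁻¹ • NNAux.Einv m mt α) f1 + (fun z => (0:ℝ) * g z.1)
            + Function.const _ c with hg0
        have hgaF : ga ∈ F := by
          rw [hFeq]
          exact ⟨_, hF1inv _ hTnorm f1 hf1, f2, hf2, c, rfl⟩
        have hg0F : g0 ∈ F := by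
          rw [hFeq]
          refine ⟨_, hF1inv _ hTnorm f1 hf1, (fun z => (0:ℝ) * g z.1), ?_, c, rfl⟩
          rw [hF2eq]
          exact ⟨g, hg, 0, le_refl 0, zero_le_one, rfl⟩
        obtain ⟨Ba, hBa⟩ := hFbd ga hgaF
        obtain ⟨B0, hB0⟩ := hFbd g0 hg0F
        have hf2bd : ∀ z, |f2 z| ≤ Ba + B0 := by
          intro z
          have e : f2 z = ga z - g0 z := by
            rw [hga, hg0]
            simp [hf2dec]
          rw [e]
          calc |ga z - g0 z| ≤ |ga z| + |g0 z| := abs_sub _ _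
            _ ≤ Ba + B0 := add_le_add (hBa z) (hB0 z)
        -- chanOp C of ga and g0
        have hCT : chanOp (confusion m mt α) (chanOp (t⁻¹ • NNAux.Einv m mt α) f1)
            = fun z => t⁻¹ * f1 z := by
          rw [NNAux.chanOp_smul_mat, NNAux.chanOp_mul_fun,
            NNAux.chanOp_conf_Einv α hα0 hαu hfull]
        have hCga : chanOp (confusion m mt α) ga
            = (fun z => t⁻¹ * f1 z) + (fun z : X × Fin (m + mt) => a * g z.1)
              + Function.const _ c := by
          rw [hga, hf2dec, NNAux.chanOp_decomp (confusion m mt α) hrow _ g a c, hCT]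
        have hCg0 : chanOp (confusion m mt α) g0
            = (fun z => t⁻¹ * f1 z) + (fun z : X × Fin (m + mt) => (0:ℝ) * g z.1)
              + Function.const _ c := by
          rw [hg0, NNAux.chanOp_decomp (confusion m mt α) hrow _ g 0 c, hCT]
        -- pointwise forms
        have hga_pt : ∀ z, chanOp (confusion m mt α) ga z
            = t⁻¹ * f z + ((1 - t⁻¹) * f2 z + (1 - t⁻¹) * c) := by
          intro z
          rw [hCga, hfdec, hf2dec]
          simp only [Pi.add_apply, Function.const_apply]
          ring
        have hg0_pt : ∀ z, chanOp (confusion m mt α) g0 z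
            = t⁻¹ * f z + ((-t⁻¹) * f2 z + (1 - t⁻¹) * c) := by
          intro z
          rw [hCg0, hfdec, hf2dec]
          simp only [Pi.add_apply, Function.const_apply]
          ring
        -- summability
        have Sf : Summable fun z => P z * f z := NNAux.summable_mul_bdd hPs hBf
        have Sf2 : Summable fun z => P z * f2 z := NNAux.summable_mul_bdd hPs hf2bd
        have SfQ : Summable fun z => Q z * f z := NNAux.summable_mul_bdd hQs hBf
        have Sf2Q : Summable fun z => Q z * f2 z := NNAux.summable_mul_bdd hQs hf2bd
        -- value identities
        have hAval : (∑' z, corrupt P (confusion m mt α) z * ga z)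
              - ∑' z, corrupt Q (confusion m mt α) z * ga z
            = t⁻¹ * ((∑' z, P z * f z) - ∑' z, Q z * f z)
              + (1 - t⁻¹) * ((∑' z, P z * f2 z) - ∑' z, Q z * f2 z) := by
          have hrw : ∀ R : X × Fin (m + mt) → ℝ,
              ∑' z, R z * chanOp (confusion m mt α) ga z
                = ∑' z, R z * (t⁻¹ * f z + ((1 - t⁻¹) * f2 z + (1 - t⁻¹) * c)) :=
            fun R => tsum_congr fun z => by rw [hga_pt z]
          rw [NNAux.tsum_corrupt_mul hPs _ hBa, NNAux.tsum_corrupt_mul hQs _ hBa,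
            hrw P, hrw Q,
            NNAux.tsum_three Sf Sf2 hPs _ _ _,
            NNAux.tsum_three SfQ Sf2Q hQs _ _ _, hP1, hQ1]
          ring
        have hBval : (∑' z, corrupt P (confusion m mt α) z * g0 z)
              - ∑' z, corrupt Q (confusion m mt α) z * g0 z
            = t⁻¹ * ((∑' z, P z * f z) - ∑' z, Q z * f z)
              + (-t⁻¹) * ((∑' z, P z * f2 z) - ∑' z, Q z * f2 z) := by
          have hrw : ∀ R : X × Fin (m + mt) → ℝ,
              ∑' z, R z * chanOp (confusion m mt α) g0 z
                = ∑' z, R z * (t⁻¹ * f z + ((-t⁻¹) * f2 z + (1 - t⁻¹) * c)) :=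
            fun R => tsum_congr fun z => by rw [hg0_pt z]
          rw [NNAux.tsum_corrupt_mul hPs _ hB0, NNAux.tsum_corrupt_mul hQs _ hB0,
            hrw P, hrw Q,
            NNAux.tsum_three Sf Sf2 hPs _ _ _,
            NNAux.tsum_three SfQ Sf2Q hQs _ _ _, hP1, hQ1]
          ring
        have hAb : (∑' z, corrupt P (confusion m mt α) z * ga z)
            - ∑' z, corrupt Q (confusion m mt α) z * ga z ≤ b := hb ⟨ga, hgaF, rfl⟩
        have hBb : (∑' z, corrupt P (confusion m mt α) z * g0 z)
            - ∑' z, corrupt Q (confusion m mt α) z * g0 z ≤ b := hb ⟨g0, hg0F, rfl⟩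
        rw [hAval] at hAb
        rw [hBval] at hBb
        set V : ℝ := (∑' z, P z * f z) - ∑' z, Q z * f z with hV
        set W : ℝ := (∑' z, P z * f2 z) - ∑' z, Q z * f2 z with hW
        have htinv0 : (0:ℝ) ≤ t⁻¹ := inv_nonneg.2 ht0.le
        have htinv1 : t⁻¹ ≤ 1 := by
          rw [inv_le_one_iff₀]
          right; exact ht1
        have hinvV : t⁻¹ * V ≤ b := by
          rcases le_or_gt 0 W with hW0 | hW0
          · have : 0 ≤ (1 - t⁻¹) * W := mul_nonneg (by linarith) hW0
            linarith
          · have h' : 0 ≤ t⁻¹ * (-W) := mul_nonneg htinv0 (by linarith)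
            rw [mul_neg] at h'
            linarith
        have := mul_le_mul_of_nonneg_left hinvV ht0.le
        rw [← mul_assoc, mul_inv_cancel₀ (ne_of_gt ht0), one_mul] at this
        exact this
      rw [Real.sSup_of_not_bddAbove hbdd, Real.sSup_of_not_bddAbove hbdd2]
  · rw [Set.not_nonempty_iff_eq_empty] at hFne
    simp [hFne]
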